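/- (Smoothness perturbation upper bound.) Let S⁽ⁱ⁾, S⁽ⁿ⁾ ∈ ℝ^N be such that the noise vector n = S⁽ⁿ⁾ − S⁽ⁱ⁾ has exactly n_f nonzero entries, each equal to 2A or −2A, where A > 0. Then SM(S⁽ⁿ⁾) ≤ SM(S⁽ⁱ⁾) + 2·n_f·A·D^{3/2}·√Δ + 2·n_f·A·√(Δ·D). -/

import Mathlib

open scoped Classical

/-- The smoothness of a graph signal `S ∈ ℝ^N` with respect to the weighted adjacency
matrix `a`: `SM(S) = ∑_{i} (∑_{j} a(i,j)·(S(j) − S(i))²)^{1/2}`. -/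
noncomputable def smoothness (N : ℕ) (a : ℕ → ℕ → ℝ) (S : ℕ → ℝ) : ℝ :=
  ∑ i ∈ Finset.range N, Real.sqrt (∑ j ∈ Finset.range N, a i j * (S j - S i) ^ 2)

/-- Minkowski-type triangle inequality for weighted finite ℓ² sums. -/
private lemma sqrt_sum_add_le (s : Finset ℕ) (w f g : ℕ → ℝ) (hw : ∀ j ∈ s, 0 ≤ w j) :
    Real.sqrt (∑ j ∈ s, w j * (f j + g j) ^ 2)
      ≤ Real.sqrt (∑ j ∈ s, w j * f j ^ 2) + Real.sqrt (∑ j ∈ s, w j * g j ^ 2) := by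
  set X := ∑ j ∈ s, w j * f j ^ 2 with hXdef
  set Y := ∑ j ∈ s, w j * g j ^ 2 with hYdef
  have hX : 0 ≤ X := Finset.sum_nonneg fun j hj => mul_nonneg (hw j hj) (sq_nonneg _)
  have hY : 0 ≤ Y := Finset.sum_nonneg fun j hj => mul_nonneg (hw j hj) (sq_nonneg _)
  have CS2 : (∑ j ∈ s, (Real.sqrt (w j) * f j) * (Real.sqrt (w j) * g j)) ^ 2 ≤ X * Y := by
    calc (∑ j ∈ s, (Real.sqrt (w j) * f j) * (Real.sqrt (w j) * g j)) ^ 2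
        ≤ (∑ j ∈ s, (Real.sqrt (w j) * f j) ^ 2) * (∑ j ∈ s, (Real.sqrt (w j) * g j) ^ 2) :=
          Finset.sum_mul_sq_le_sq_mul_sq s _ _
      _ = X * Y := by
          congr 1 <;> refine Finset.sum_congr rfl fun j hj => ?_ <;>
            rw [mul_pow, Real.sq_sqrt (hw j hj)]
  have hcs : ∑ j ∈ s, w j * (f j * g j) ≤ Real.sqrt X * Real.sqrt Y := by
    have he : ∑ j ∈ s, w j * (f j * g j)
        = ∑ j ∈ s, (Real.sqrt (w j) * f j) * (Real.sqrt (w j) * g j) := by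
      refine Finset.sum_congr rfl fun j hj => ?_
      rw [show (Real.sqrt (w j) * f j) * (Real.sqrt (w j) * g j)
            = (Real.sqrt (w j) * Real.sqrt (w j)) * (f j * g j) by ring,
          Real.mul_self_sqrt (hw j hj)]
    rw [he]
    calc (∑ j ∈ s, (Real.sqrt (w j) * f j) * (Real.sqrt (w j) * g j))
        ≤ |∑ j ∈ s, (Real.sqrt (w j) * f j) * (Real.sqrt (w j) * g j)| := le_abs_self _
      _ = Real.sqrt ((∑ j ∈ s, (Real.sqrt (w j) * f j) * (Real.sqrt (w j) * g j)) ^ 2) :=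
          (Real.sqrt_sq_eq_abs _).symm
      _ ≤ Real.sqrt (X * Y) := Real.sqrt_le_sqrt CS2
      _ = Real.sqrt X * Real.sqrt Y := Real.sqrt_mul hX _
  have hP : ∑ j ∈ s, w j * (f j + g j) ^ 2
      = X + Y + 2 * ∑ j ∈ s, w j * (f j * g j) := by
    rw [hXdef, hYdef, Finset.mul_sum, ← Finset.sum_add_distrib, ← Finset.sum_add_distrib]
    refine Finset.sum_congr rfl fun j hj => ?_
    ring
  have hle : ∑ j ∈ s, w j * (f j + g j) ^ 2 ≤ (Real.sqrt X + Real.sqrt Y) ^ 2 := by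
    have : (Real.sqrt X + Real.sqrt Y) ^ 2
        = X + Y + 2 * (Real.sqrt X * Real.sqrt Y) := by
      rw [add_sq, Real.sq_sqrt hX, Real.sq_sqrt hY]; ring
    rw [hP, this]
    linarith
  calc Real.sqrt (∑ j ∈ s, w j * (f j + g j) ^ 2)
      ≤ Real.sqrt ((Real.sqrt X + Real.sqrt Y) ^ 2) := Real.sqrt_le_sqrt hle
    _ = Real.sqrt X + Real.sqrt Y := by
        rw [Real.sqrt_sq (by positivity)]

/-- **Smoothness perturbation upper bound.**
If the noise vector `n = Sⁿ − Sⁱ` has exactly `n_f` nonzero entries, each equal to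
`2A` or `−2A` with `A > 0`, then
`SM(Sⁿ) ≤ SM(Sⁱ) + 2·n_f·A·D^{3/2}·√Δ + 2·n_f·A·√(Δ·D)`, where `Δ` bounds the edge
weights and `D ≥ 1` bounds the node degrees. -/
theorem smoothness_perturb_upper (N : ℕ) (hN : 1 ≤ N) (a : ℕ → ℕ → ℝ)
    (hsymm : ∀ i j, a i j = a j i) (hnn : ∀ i j, 0 ≤ a i j)
    (hdiag : ∀ i, a i i = 0)
    (Δ : ℝ) (hΔ : 0 < Δ) (haΔ : ∀ i j, a i j ≤ Δ)
    (D : ℝ) (hD : 1 ≤ D)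
    (hdeg : ∀ i ∈ Finset.range N,
      ((((Finset.range N).filter (fun j => a i j ≠ 0)).card : ℝ)) ≤ D)
    (A : ℝ) (hA : 0 < A) (nf : ℕ)
    (Si Sn : ℕ → ℝ)
    (F : Finset ℕ) (hFsub : F ⊆ Finset.range N) (hFcard : F.card = nf)
    (hFval : ∀ k ∈ F, Sn k - Si k = 2 * A ∨ Sn k - Si k = -(2 * A))
    (hF0 : ∀ k ∈ Finset.range N, k ∉ F → Sn k = Si k) :
    smoothness N a Sn ≤ smoothness N a Si +
      2 * (nf : ℝ) * A * D ^ ((3 : ℝ) / 2) * Real.sqrt Δ +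
      2 * (nf : ℝ) * A * Real.sqrt (Δ * D) := by
  have hD0 : (0 : ℝ) < D := lt_of_lt_of_le one_pos hD
  set nfn : ℕ → ℝ := fun k => Sn k - Si k with hnfn
  have hnfn0 : ∀ k ∈ Finset.range N, k ∉ F → nfn k = 0 := by
    intro k hk hkF; simp only [hnfn]; rw [hF0 k hk hkF]; ring
  have habs : ∀ k ∈ F, |nfn k| = 2 * A := by
    intro k hk
    rcases hFval k hk with h | h
    · simp only [hnfn, h]; rw [abs_of_nonneg (by linarith)]
    · simp only [hnfn, h]; rw [abs_neg, abs_of_nonneg (by linarith)]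
  -- row sums are bounded by Δ * D
  have hrowsum : ∀ i ∈ Finset.range N, ∑ j ∈ Finset.range N, a i j ≤ Δ * D := by
    intro i hi
    have h1 : ∑ j ∈ Finset.range N, a i j
        = ∑ j ∈ (Finset.range N).filter (fun j => a i j ≠ 0), a i j := by
      rw [Finset.sum_filter_ne_zero]
    rw [h1]
    calc ∑ j ∈ (Finset.range N).filter (fun j => a i j ≠ 0), a i j
        ≤ ((Finset.range N).filter (fun j => a i j ≠ 0)).card • Δ :=
          Finset.sum_le_card_nsmul _ _ _ (fun j _ => haΔ i j)
      _ = (((Finset.range N).filter (fun j => a i j ≠ 0)).card : ℝ) * Δ := by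
          rw [nsmul_eq_mul]
      _ ≤ D * Δ := by
          exact mul_le_mul_of_nonneg_right (hdeg i hi) hΔ.le
      _ = Δ * D := mul_comm _ _
  -- row-wise triangle inequality
  have hrow : ∀ i ∈ Finset.range N,
      Real.sqrt (∑ j ∈ Finset.range N, a i j * (Sn j - Sn i) ^ 2)
        ≤ Real.sqrt (∑ j ∈ Finset.range N, a i j * (Si j - Si i) ^ 2)
          + (Real.sqrt (∑ j ∈ Finset.range N, a i j * (nfn j) ^ 2)
          + Real.sqrt (∑ j ∈ Finset.range N, a i j) * |nfn i|) := by
    intro i hi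
    have hw : ∀ j ∈ Finset.range N, 0 ≤ a i j := fun j _ => hnn i j
    have e : (∑ j ∈ Finset.range N, a i j * (Sn j - Sn i) ^ 2)
        = ∑ j ∈ Finset.range N,
            a i j * ((Si j - Si i) + (nfn j + -(nfn i))) ^ 2 := by
      refine Finset.sum_congr rfl fun j _ => ?_
      simp only [hnfn]; ring_nf
    rw [e]
    have h1 := sqrt_sum_add_le (Finset.range N) (a i) (fun j => Si j - Si i)
      (fun j => nfn j + -(nfn i)) hw
    have h2 := sqrt_sum_add_le (Finset.range N) (a i) nfn (fun _ => -(nfn i)) hw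
    have h3 : Real.sqrt (∑ j ∈ Finset.range N, a i j * (-(nfn i)) ^ 2)
        = Real.sqrt (∑ j ∈ Finset.range N, a i j) * |nfn i| := by
      have : ∑ j ∈ Finset.range N, a i j * (-(nfn i)) ^ 2
          = (∑ j ∈ Finset.range N, a i j) * (nfn i) ^ 2 := by
        rw [Finset.sum_mul]; exact Finset.sum_congr rfl fun j _ => by ring
      rw [this, Real.sqrt_mul (Finset.sum_nonneg hw), Real.sqrt_sq_eq_abs]
    rw [h3] at h2
    calc Real.sqrt (∑ j ∈ Finset.range N,
            a i j * ((Si j - Si i) + (nfn j + -(nfn i))) ^ 2)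
        ≤ Real.sqrt (∑ j ∈ Finset.range N, a i j * (Si j - Si i) ^ 2)
          + Real.sqrt (∑ j ∈ Finset.range N, a i j * (nfn j + -(nfn i)) ^ 2) := h1
      _ ≤ _ := by
          exact add_le_add_right h2 _
  -- sum the row-wise bound
  have hsum : smoothness N a Sn ≤ smoothness N a Si
      + (∑ i ∈ Finset.range N, Real.sqrt (∑ j ∈ Finset.range N, a i j * (nfn j) ^ 2))
      + (∑ i ∈ Finset.range N, Real.sqrt (∑ j ∈ Finset.range N, a i j) * |nfn i|) := by
    unfold smoothness
    calc ∑ i ∈ Finset.range N, Real.sqrt (∑ j ∈ Finset.range N, a i j * (Sn j - Sn i) ^ 2)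
        ≤ ∑ i ∈ Finset.range N,
            (Real.sqrt (∑ j ∈ Finset.range N, a i j * (Si j - Si i) ^ 2)
            + (Real.sqrt (∑ j ∈ Finset.range N, a i j * (nfn j) ^ 2)
            + Real.sqrt (∑ j ∈ Finset.range N, a i j) * |nfn i|)) :=
          Finset.sum_le_sum hrow
      _ = _ := by
          rw [Finset.sum_add_distrib, Finset.sum_add_distrib]; ring
  -- bound the third sum
  have hS3 : (∑ i ∈ Finset.range N, Real.sqrt (∑ j ∈ Finset.range N, a i j) * |nfn i|)
      ≤ 2 * (nf : ℝ) * A * Real.sqrt (Δ * D) := by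
    have e : (∑ i ∈ Finset.range N, Real.sqrt (∑ j ∈ Finset.range N, a i j) * |nfn i|)
        = ∑ i ∈ F, Real.sqrt (∑ j ∈ Finset.range N, a i j) * |nfn i| := by
      refine (Finset.sum_subset hFsub fun i hi hiF => ?_).symm
      rw [hnfn0 i hi hiF]; simp
    rw [e]
    calc ∑ i ∈ F, Real.sqrt (∑ j ∈ Finset.range N, a i j) * |nfn i|
        ≤ ∑ i ∈ F, Real.sqrt (Δ * D) * (2 * A) := by
          refine Finset.sum_le_sum fun i hi => ?_
          rw [habs i hi]
          exact mul_le_mul_of_nonneg_right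
            (Real.sqrt_le_sqrt (hrowsum i (hFsub hi))) (by linarith)
      _ = (nf : ℝ) * (Real.sqrt (Δ * D) * (2 * A)) := by
          rw [Finset.sum_const, hFcard, nsmul_eq_mul]
      _ = 2 * (nf : ℝ) * A * Real.sqrt (Δ * D) := by ring
  -- bound the second sum
  have hS2 : (∑ i ∈ Finset.range N, Real.sqrt (∑ j ∈ Finset.range N, a i j * (nfn j) ^ 2))
      ≤ 2 * (nf : ℝ) * A * D ^ ((3 : ℝ) / 2) * Real.sqrt Δ := by
    set G := (Finset.range N).filter (fun i => ∃ j ∈ F, a i j ≠ 0) with hGdef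
    have hinner : ∀ i, (∑ j ∈ Finset.range N, a i j * (nfn j) ^ 2)
        = ∑ j ∈ F, a i j * (2 * A) ^ 2 := by
      intro i
      rw [← Finset.sum_subset hFsub (fun j hj hjF => by rw [hnfn0 j hj hjF]; ring)]
      refine Finset.sum_congr rfl fun j hj => ?_
      rw [← sq_abs (nfn j), habs j hj]
    have e : (∑ i ∈ Finset.range N, Real.sqrt (∑ j ∈ Finset.range N, a i j * (nfn j) ^ 2))
        = ∑ i ∈ G, Real.sqrt (∑ j ∈ Finset.range N, a i j * (nfn j) ^ 2) := by
      refine (Finset.sum_subset (Finset.filter_subset _ _) fun i hi hiG => ?_).symm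
      have hz : ∀ j ∈ F, a i j = 0 := by
        intro j hj
        by_contra hne
        exact hiG (Finset.mem_filter.mpr ⟨hi, ⟨j, hj, hne⟩⟩)
      rw [hinner i, Finset.sum_eq_zero fun j hj => by rw [hz j hj]; ring, Real.sqrt_zero]
    rw [e]
    have hterm : ∀ i ∈ G, Real.sqrt (∑ j ∈ Finset.range N, a i j * (nfn j) ^ 2)
        ≤ 2 * A * Real.sqrt (Δ * D) := by
      intro i hi
      have hiN : i ∈ Finset.range N := (Finset.mem_filter.mp hi).1
      have hb : (∑ j ∈ Finset.range N, a i j * (nfn j) ^ 2) ≤ (2 * A) ^ 2 * (Δ * D) := by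
        rw [hinner i]
        have h1 : ∑ j ∈ F, a i j * (2 * A) ^ 2 = (2 * A) ^ 2 * ∑ j ∈ F, a i j := by
          rw [Finset.mul_sum]; exact Finset.sum_congr rfl fun j _ => by ring
        rw [h1]
        have h2 : ∑ j ∈ F, a i j ≤ Δ * D := by
          calc ∑ j ∈ F, a i j ≤ ∑ j ∈ Finset.range N, a i j :=
                Finset.sum_le_sum_of_subset_of_nonneg hFsub (fun j _ _ => hnn i j)
            _ ≤ Δ * D := hrowsum i hiN
        exact mul_le_mul_of_nonneg_left h2 (sq_nonneg _)
      calc Real.sqrt (∑ j ∈ Finset.range N, a i j * (nfn j) ^ 2)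
          ≤ Real.sqrt ((2 * A) ^ 2 * (Δ * D)) := Real.sqrt_le_sqrt hb
        _ = 2 * A * Real.sqrt (Δ * D) := by
            rw [Real.sqrt_mul (sq_nonneg _), Real.sqrt_sq (by linarith)]
    have hcard : (G.card : ℝ) ≤ (nf : ℝ) * D := by
      have hsub : G ⊆ F.biUnion (fun j => (Finset.range N).filter (fun i => a j i ≠ 0)) := by
        intro i hi
        rcases Finset.mem_filter.mp hi with ⟨hiN, j, hj, hne⟩
        exact Finset.mem_biUnion.mpr ⟨j, hj, Finset.mem_filter.mpr
          ⟨hiN, by rw [← hsymm i j]; exact hne⟩⟩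
      have h1 : G.card ≤ ∑ j ∈ F, ((Finset.range N).filter (fun i => a j i ≠ 0)).card :=
        le_trans (Finset.card_le_card hsub) Finset.card_biUnion_le
      calc (G.card : ℝ)
          ≤ ((∑ j ∈ F, ((Finset.range N).filter (fun i => a j i ≠ 0)).card : ℕ) : ℝ) := by
            exact_mod_cast h1
        _ = ∑ j ∈ F, (((Finset.range N).filter (fun i => a j i ≠ 0)).card : ℝ) := by
            push_cast; rfl
        _ ≤ ∑ j ∈ F, D := Finset.sum_le_sum fun j hj => hdeg j (hFsub hj)
        _ = (nf : ℝ) * D := by rw [Finset.sum_const, hFcard, nsmul_eq_mul]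
    have hD32 : D ^ ((3 : ℝ) / 2) = D * Real.sqrt D := by
      rw [show (3 : ℝ) / 2 = 1 + 1 / 2 by norm_num, Real.rpow_add hD0, Real.rpow_one,
        ← Real.sqrt_eq_rpow]
    calc ∑ i ∈ G, Real.sqrt (∑ j ∈ Finset.range N, a i j * (nfn j) ^ 2)
        ≤ ∑ i ∈ G, 2 * A * Real.sqrt (Δ * D) := Finset.sum_le_sum hterm
      _ = (G.card : ℝ) * (2 * A * Real.sqrt (Δ * D)) := by
          rw [Finset.sum_const, nsmul_eq_mul]
      _ ≤ (nf : ℝ) * D * (2 * A * Real.sqrt (Δ * D)) := by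
          exact mul_le_mul_of_nonneg_right hcard (by positivity)
      _ = 2 * (nf : ℝ) * A * D ^ ((3 : ℝ) / 2) * Real.sqrt Δ := by
          rw [hD32, Real.sqrt_mul hΔ.le]; ring
  linarith
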